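/- Let A = bidiag({a_k}, {b_k}) be an upper bidiagonal N×N matrix with all b_i ≠ 0, and let a be an eigenvalue of A of algebraic multiplicity m. Then the Jordan form of A has exactly one Jordan block associated to a, of size m, i.e., rank((A − aI)^j) = N − min(j, m) for all j ≥ 0. -/

import Mathlib

open Matrix Polynomial Module

section Aux

variable {N : ℕ}

/-- nullity of a square complex matrix -/
noncomputable def mnul (M : Matrix (Fin N) (Fin N) ℂ) : ℕ :=
  Module.finrank ℂ (LinearMap.ker M.mulVecLin)

lemma nullity_comp (f g : (Fin N → ℂ) →ₗ[ℂ] (Fin N → ℂ)) :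
    finrank ℂ (LinearMap.ker (g ∘ₗ f)) ≤
      finrank ℂ (LinearMap.ker g) + finrank ℂ (LinearMap.ker f) := by
  have hmap : ∀ x ∈ LinearMap.ker (g ∘ₗ f), f x ∈ LinearMap.ker g := by
    intro x hx
    simpa [LinearMap.mem_ker] using hx
  have h1 : finrank ℂ (LinearMap.range (f.restrict hmap)) +
      finrank ℂ (LinearMap.ker (f.restrict hmap))
      = finrank ℂ (LinearMap.ker (g ∘ₗ f)) :=
    LinearMap.finrank_range_add_finrank_ker (f.restrict hmap)
  have h2 : finrank ℂ (LinearMap.range (f.restrict hmap)) ≤ finrank ℂ (LinearMap.ker g) :=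
    Submodule.finrank_le _
  have h3 : finrank ℂ (LinearMap.ker (f.restrict hmap)) ≤ finrank ℂ (LinearMap.ker f) := by
    have hincl : ∀ y : LinearMap.ker (f.restrict hmap),
        ((LinearMap.ker (g ∘ₗ f)).subtype ∘ₗ (LinearMap.ker (f.restrict hmap)).subtype) y
          ∈ LinearMap.ker f := by
      intro y
      have hy : (f.restrict hmap) y.1 = 0 := y.2
      have hy' := congrArg Subtype.val hy
      simp only [LinearMap.restrict_apply, ZeroMemClass.coe_zero] at hy'
      simp only [LinearMap.mem_ker, LinearMap.coe_comp, Function.comp_apply,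
        Submodule.coe_subtype]
      exact hy'
    have hinj : Function.Injective (LinearMap.codRestrict (LinearMap.ker f)
        ((LinearMap.ker (g ∘ₗ f)).subtype ∘ₗ (LinearMap.ker (f.restrict hmap)).subtype) hincl) := by
      intro y z hyz
      have h' := congrArg Subtype.val hyz
      simp only [LinearMap.codRestrict_apply, LinearMap.coe_comp, Function.comp_apply,
        Submodule.coe_subtype] at h'
      exact Subtype.ext (Subtype.ext h')
    exact LinearMap.finrank_le_finrank_of_injective hinj
  omega

lemma mnul_mul_le (M M' : Matrix (Fin N) (Fin N) ℂ) :
    mnul (M * M') ≤ mnul M + mnul M' := by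
  unfold mnul
  rw [Matrix.mulVecLin_mul]
  exact nullity_comp M'.mulVecLin M.mulVecLin

lemma mnul_le_one (C : Matrix (Fin N) (Fin N) ℂ)
    (hbd : ∀ i j : Fin N, (j : ℕ) ≠ (i : ℕ) → (j : ℕ) ≠ (i : ℕ) + 1 → C i j = 0)
    (hb : ∀ i j : Fin N, (j : ℕ) = (i : ℕ) + 1 → C i j ≠ 0) :
    mnul C ≤ 1 := by
  rcases Nat.eq_zero_or_pos N with hN | hN
  · subst hN
    have h := Submodule.finrank_le (LinearMap.ker C.mulVecLin)
    simp only [mnul]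
    have h0 : finrank ℂ (Fin 0 → ℂ) = 0 := by simp
    omega
  · set i0 : Fin N := ⟨0, hN⟩ with hi0
    have key : ∀ x ∈ LinearMap.ker C.mulVecLin, x i0 = 0 → x = 0 := by
      intro x hx h0
      have hrow : ∀ i : Fin N, ∑ j, C i j * x j = 0 := by
        intro i
        have := congrFun (LinearMap.mem_ker.mp hx) i
        simpa [Matrix.mulVecLin_apply, Matrix.mulVec, dotProduct] using this
      have hall : ∀ k, (hk : k < N) → x ⟨k, hk⟩ = 0 := by
        intro k
        induction k with
        | zero => intro hk; exact h0
        | succ k ih =>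
          intro hk
          have hkN : k < N := Nat.lt_of_succ_lt hk
          have hxk : x ⟨k, hkN⟩ = 0 := ih hkN
          have hsum := hrow ⟨k, hkN⟩
          have hsingle : ∑ j, C ⟨k, hkN⟩ j * x j
              = C ⟨k, hkN⟩ ⟨k + 1, hk⟩ * x ⟨k + 1, hk⟩ := by
            apply Finset.sum_eq_single_of_mem _ (Finset.mem_univ _)
            intro j _ hj
            by_cases hjk : (j : ℕ) = k
            · have hje : j = ⟨k, hkN⟩ := Fin.ext hjk
              rw [hje, hxk, mul_zero]
            · rw [hbd _ _ hjk ?_, zero_mul]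
              intro hcon
              exact hj (Fin.ext hcon)
          rw [hsingle] at hsum
          have hc := hb ⟨k, hkN⟩ ⟨k + 1, hk⟩ rfl
          exact (mul_eq_zero.mp hsum).resolve_left hc
      funext i
      have := hall i.1 i.2
      simpa using this
    set π : LinearMap.ker C.mulVecLin →ₗ[ℂ] ℂ :=
      (LinearMap.proj i0).comp (LinearMap.ker C.mulVecLin).subtype with hπ
    have hπinj : Function.Injective π := by
      rw [injective_iff_map_eq_zero]
      intro z hz
      exact Subtype.ext (key z.1 z.2 hz)
    have := LinearMap.finrank_le_finrank_of_injective hπinj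
    simpa [mnul, Module.finrank_self] using this

end Aux

theorem bidiagonal_single_jordan_block {N : ℕ}
    (A : Matrix (Fin N) (Fin N) ℂ)
    -- A is upper bidiagonal:
    (hbd : ∀ i j : Fin N, (j : ℕ) ≠ (i : ℕ) → (j : ℕ) ≠ (i : ℕ) + 1 → A i j = 0)
    -- all superdiagonal entries are nonzero:
    (hb : ∀ i j : Fin N, (j : ℕ) = (i : ℕ) + 1 → A i j ≠ 0)
    (a : ℂ) (ha : ∃ i : Fin N, A i i = a)
    (m : ℕ) (hm : m = Set.ncard {i : Fin N | A i i = a}) :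
    ∀ j : ℕ, ((A - a • (1 : Matrix (Fin N) (Fin N) ℂ)) ^ j).rank = N - min j m := by
  classical
  intro j
  set B : Matrix (Fin N) (Fin N) ℂ := A - a • 1 with hB
  have hBsub : ∀ c : ℂ, B - c • 1 = A - (a + c) • 1 := by
    intro c
    rw [hB, add_smul, sub_sub]
  -- key one-dimensionality
  have hL1 : ∀ c : ℂ, mnul (A - c • 1) ≤ 1 := by
    intro c
    apply mnul_le_one
    · intro i k hk1 hk2
      have hik : i ≠ k := fun h => hk1 (by rw [h])
      simp [Matrix.sub_apply, Matrix.smul_apply, Matrix.one_apply_ne hik,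
        hbd i k hk1 hk2]
    · intro i k hk
      have hik : i ≠ k := by
        intro h; rw [h] at hk; omega
      simpa [Matrix.sub_apply, Matrix.smul_apply, Matrix.one_apply_ne hik] using hb i k hk
  have hL1B : ∀ c : ℂ, mnul (B - c • 1) ≤ 1 := fun c => by rw [hBsub c]; exact hL1 _
  have hL1B0 : mnul B ≤ 1 := by
    have := hL1B 0
    simpa using this
  -- characteristic polynomial
  have htri : B.BlockTriangular id := by
    intro i k hik
    have h' : (k : ℕ) < (i : ℕ) := hik
    have h1 : A i k = 0 := hbd i k (by omega) (by omega)
    have h2 : i ≠ k := by intro h; rw [h] at h'; omega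
    show (A - a • 1) i k = 0
    simp [Matrix.sub_apply, Matrix.smul_apply, Matrix.one_apply_ne h2, h1]
  have hcp : B.charpoly = ∏ i : Fin N, (X - C (B i i)) :=
    Matrix.charpoly_of_upperTriangular B htri
  set s₀ : Finset (Fin N) := Finset.univ.filter (fun i : Fin N => B i i = 0) with hs₀
  set s₁ : Finset (Fin N) := Finset.univ.filter (fun i : Fin N => ¬B i i = 0) with hs₁
  have hms₀ : m = s₀.card := by
    rw [hm]
    have hset : {i : Fin N | A i i = a} = {i : Fin N | B i i = 0} := by
      ext i
      simp [hB, Matrix.sub_apply, Matrix.smul_apply, Matrix.one_apply_eq, sub_eq_zero]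
    rw [hset, Set.ncard_eq_toFinset_card', Set.toFinset_setOf]
  have hcard : s₀.card + s₁.card = N := by
    rw [hs₀, hs₁, Finset.card_filter_add_card_filter_not]
    simp
  set q : Polynomial ℂ := ∏ i ∈ s₁, (X - C (B i i)) with hq
  have hfac : B.charpoly = X ^ s₀.card * q := by
    rw [hcp, ← Finset.prod_filter_mul_prod_filter_not Finset.univ (fun i => B i i = 0)]
    congr 1
    rw [Finset.prod_congr rfl (fun i hi => ?_), Finset.prod_const, ← hs₀]
    rw [(Finset.mem_filter.mp hi).2, _root_.map_zero, sub_zero]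
  set qB : Matrix (Fin N) (Fin N) ℂ := Polynomial.aeval B q with hqB
  have hCH : B ^ s₀.card * qB = 0 := by
    have h := Matrix.aeval_self_charpoly B
    rw [hfac, _root_.map_mul, _root_.map_pow, Polynomial.aeval_X] at h
    exact h
  -- nullity of qB
  have hqnul : mnul qB ≤ s₁.card := by
    have key : ∀ s : Finset (Fin N),
        mnul (Polynomial.aeval B (∏ i ∈ s, (X - C (B i i)))) ≤ s.card := by
      intro s
      induction s using Finset.induction with
      | empty =>
        rw [Finset.prod_empty, _root_.map_one]
        simp [mnul, Finset.prod_empty, _root_.map_one, Matrix.mulVecLin_one, Module.End.one_eq_id,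
          LinearMap.ker_id]
      | @insert i s hx ih =>
        rw [Finset.prod_insert hx, _root_.map_mul]
        have h1 : Polynomial.aeval B (X - C (B i i)) = B - (B i i) • 1 := by
          rw [_root_.map_sub, Polynomial.aeval_X, Polynomial.aeval_C, Algebra.algebraMap_eq_smul_one]
        refine le_trans (mnul_mul_le _ _) ?_
        rw [Finset.card_insert_of_notMem hx, h1]
        have h2 := hL1B (B i i)
        omega
    exact key s₁
  -- rank-nullity
  have hrn : ∀ M : Matrix (Fin N) (Fin N) ℂ,
      M.rank + mnul M = N := by
    intro M
    have h := LinearMap.finrank_range_add_finrank_ker M.mulVecLin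
    have hN : finrank ℂ (Fin N → ℂ) = N := by simp
    rw [hN] at h
    exact h
  -- powers as linear maps
  have hker_mono : ∀ k, LinearMap.ker ((B ^ k).mulVecLin) ≤
      LinearMap.ker ((B ^ (k + 1)).mulVecLin) := by
    intro k x hx
    have hx' : (B ^ k).mulVec x = 0 := hx
    show (B ^ (k + 1)).mulVec x = 0
    rw [pow_succ', ← Matrix.mulVec_mulVec, hx', Matrix.mulVec_zero]
  have humono : ∀ k l : ℕ, k ≤ l → mnul (B ^ k) ≤ mnul (B ^ l) := by
    intro k l hkl
    have hmon : Monotone (fun k => LinearMap.ker ((B ^ k).mulVecLin)) :=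
      monotone_nat_of_le_succ hker_mono
    exact Submodule.finrank_mono (hmon hkl)
  have husucc : ∀ k, mnul (B ^ (k + 1)) ≤ mnul (B ^ k) + 1 := by
    intro k
    have hrw : (B ^ (k + 1)).mulVecLin = (B ^ k).mulVecLin ∘ₗ B.mulVecLin := by
      rw [pow_succ, Matrix.mulVecLin_mul]
    have h := nullity_comp B.mulVecLin ((B ^ k).mulVecLin)
    have h2 : mnul (B ^ (k + 1)) ≤ mnul (B ^ k) + mnul B := by
      unfold mnul
      rw [hrw]
      exact h
    omega
  have hule : ∀ k, mnul (B ^ k) ≤ k := by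
    intro k
    induction k with
    | zero =>
      simp [mnul, pow_zero, Matrix.mulVecLin_one, Module.End.one_eq_id, LinearMap.ker_id]
    | succ k ih =>
      have := husucc k
      omega
  -- lower bound at m
  have hum_ge : m ≤ mnul (B ^ s₀.card) := by
    have hrange : LinearMap.range qB.mulVecLin ≤ LinearMap.ker ((B ^ s₀.card).mulVecLin) := by
      rintro _ ⟨x, rfl⟩
      show (B ^ s₀.card).mulVec (qB.mulVec x) = 0
      rw [Matrix.mulVec_mulVec, hCH, Matrix.zero_mulVec]
    have h1 : finrank ℂ (LinearMap.range qB.mulVecLin) ≤ mnul (B ^ s₀.card) :=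
      Submodule.finrank_mono hrange
    have h2 := hrn qB
    simp only [Matrix.rank] at h2
    omega
  have hum : mnul (B ^ s₀.card) = m := by
    have h1 := hule s₀.card
    omega
  -- coprimality injection: mnul (B ^ k) ≤ m for all k
  have hinj_le : ∀ k : ℕ, mnul (B ^ k) ≤ mnul (B ^ s₀.card) := by
    intro k
    have hcop : IsCoprime ((X : ℂ[X]) ^ k) q := by
      apply IsCoprime.pow_left
      apply IsCoprime.prod_right
      intro i hi
      have hne : B i i ≠ 0 := (Finset.mem_filter.mp hi).2
      have hthis := Polynomial.isCoprime_X_sub_C_of_isUnit_sub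
        (a := (0 : ℂ)) (b := B i i) ((sub_ne_zero.mpr (Ne.symm hne)).isUnit)
      simpa using hthis
    obtain ⟨u, v, huv⟩ := hcop
    have huvB : (Polynomial.aeval B u) * B ^ k + (Polynomial.aeval B v) * qB = 1 := by
      have h := congrArg (Polynomial.aeval B) huv
      simpa [_root_.map_add, _root_.map_mul, _root_.map_pow, Polynomial.aeval_X, _root_.map_one] using h
    have hmap : ∀ x ∈ LinearMap.ker ((B ^ k).mulVecLin),
        qB.mulVecLin x ∈ LinearMap.ker ((B ^ s₀.card).mulVecLin) := by
      intro x _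
      show (B ^ s₀.card).mulVec (qB.mulVec x) = 0
      rw [Matrix.mulVec_mulVec, hCH, Matrix.zero_mulVec]
    set φ := (qB.mulVecLin).restrict hmap with hφ
    have hφinj : Function.Injective φ := by
      rw [injective_iff_map_eq_zero]
      intro z hz
      have hz1 : qB.mulVec z.1 = 0 := by
        have := congrArg Subtype.val hz
        simpa [hφ, LinearMap.restrict_apply] using this
      have hz2 : (B ^ k).mulVec z.1 = 0 := z.2
      apply Subtype.ext
      have hcalc : z.1 = ((Polynomial.aeval B u) * B ^ k
          + (Polynomial.aeval B v) * qB).mulVec z.1 := by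
        rw [huvB, Matrix.one_mulVec]
      rw [hcalc, Matrix.add_mulVec, ← Matrix.mulVec_mulVec, ← Matrix.mulVec_mulVec,
        hz1, hz2, Matrix.mulVec_zero, Matrix.mulVec_zero, add_zero]
      rfl
    exact LinearMap.finrank_le_finrank_of_injective hφinj
  -- strict growth below m
  have hstrict : ∀ k, k < m → mnul (B ^ k) < mnul (B ^ (k + 1)) := by
    intro k hk
    by_contra hcon
    push_neg at hcon
    have heq : LinearMap.ker ((B ^ k).mulVecLin) = LinearMap.ker ((B ^ (k + 1)).mulVecLin) :=
      Submodule.eq_of_le_of_finrank_le (hker_mono k) hcon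
    have hpow : ∀ l : ℕ, (B ^ l).mulVecLin = B.mulVecLin ^ l := by
      intro l
      induction l with
      | zero => simp [pow_zero, Matrix.mulVecLin_one, Module.End.one_eq_id]
      | succ l ih => rw [pow_succ, pow_succ, Matrix.mulVecLin_mul, ih]; rfl
    rw [hpow, hpow] at heq
    have hconst := Module.End.ker_pow_constant heq (s₀.card - k)
    have hkm : k + (s₀.card - k) = s₀.card := by omega
    rw [hkm] at hconst
    have hequ : mnul (B ^ k) = mnul (B ^ s₀.card) := by
      unfold mnul
      rw [hpow, hpow, hconst]
    have h1 := hule k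
    omega
  have hgen : ∀ k, k ≤ m → k ≤ mnul (B ^ k) := by
    intro k
    induction k with
    | zero => intro _; exact Nat.zero_le _
    | succ k ih =>
      intro hk
      have h1 := hstrict k (by omega)
      have h2 := ih (by omega)
      omega
  -- conclusion
  have hfin : mnul (B ^ j) = min j m := by
    rcases le_or_gt j m with hjm | hjm
    · have h1 := hule j
      have h2 := hgen j hjm
      rw [min_eq_left hjm]
      omega
    · have h1 := humono s₀.card j (by omega)
      have h2 := hinj_le j
      rw [min_eq_right hjm.le]
      omega
  have hrnj := hrn (B ^ j)
  have hminle : min j m ≤ m := min_le_right j m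
  omega
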